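/- For any orthogonal matrix R ∈ O(3) and any matrix K with singular value decomposition K = U D Vᵀ (D diagonal with nonnegative entries, U, V orthogonal), tr(Rᵀ K) ≤ tr(D), with equality attained at R = U Vᵀ. -/
import Mathlib

open Matrix

lemma orth_diag_le_one {n : ℕ} (Q : Matrix (Fin n) (Fin n) ℝ)
    (hQ : Q.transpose * Q = 1) (j : Fin n) : Q j j ≤ 1 := by
  have h : (Q.transpose * Q) j j = 1 := by rw [hQ]; simp
  have hsum : ∑ i, Q i j * Q i j = 1 := by
    simpa [Matrix.mul_apply, Matrix.transpose_apply] using h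
  nlinarith [Finset.single_le_sum (f := fun i => Q i j * Q i j)
      (fun i _ => mul_self_nonneg (Q i j)) (Finset.mem_univ j)]

/-- SVD step of the orthogonal Procrustes problem: for `K = U D Vᵀ`,
`tr(Rᵀ K) ≤ tr D` for all orthogonal `R`, with equality at `R = U Vᵀ`. -/
theorem procrustes_svd_optimal
    (U V D K : Matrix (Fin 3) (Fin 3) ℝ)
    (hU : U.transpose * U = 1) (hV : V.transpose * V = 1)
    (d : Fin 3 → ℝ) (hd : ∀ j, 0 ≤ d j) (hD : D = Matrix.diagonal d)
    (hK : K = U * D * V.transpose) :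
    (∀ R : Matrix (Fin 3) (Fin 3) ℝ, R.transpose * R = 1 →
      (R.transpose * K).trace ≤ D.trace) ∧
    ((U * V.transpose).transpose * K).trace = D.trace := by
  have hUU : U * U.transpose = 1 := mul_eq_one_comm.mp hU
  have hVV : V * V.transpose = 1 := mul_eq_one_comm.mp hV
  constructor
  · intro R hR
    set Q := V.transpose * R.transpose * U with hQdef
    have hQorth : Q.transpose * Q = 1 := by
      have : Q.transpose * Q = U.transpose * (R * (V * V.transpose) * R.transpose) * U := by
        simp [hQdef, Matrix.transpose_mul, Matrix.mul_assoc]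
      rw [this, hVV, Matrix.mul_one, mul_eq_one_comm.mp hR, Matrix.mul_one, hU]
    have htr : (R.transpose * K).trace = (Q * D).trace := by
      rw [hK, hQdef, ← Matrix.mul_assoc, Matrix.trace_mul_comm]
      simp [Matrix.mul_assoc]
    rw [htr, hD]
    have : (Q * Matrix.diagonal d).trace = ∑ j, Q j j * d j := by
      simp [Matrix.trace, Matrix.diag, Matrix.mul_apply, Matrix.diagonal]
    rw [this, Matrix.trace_diagonal]
    apply Finset.sum_le_sum
    intro j _
    have := orth_diag_le_one Q hQorth j
    nlinarith [hd j]
  · rw [hK, Matrix.transpose_mul, Matrix.transpose_transpose]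
    rw [show V * U.transpose * (U * D * V.transpose)
        = V * (U.transpose * U) * D * V.transpose by
      simp [Matrix.mul_assoc]]
    rw [hU, Matrix.mul_one, Matrix.trace_mul_comm, ← Matrix.mul_assoc, hV, Matrix.one_mul]
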